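/- arXiv:2307.05021 — 3 statements merged into one kernel-verified Lean document; each statement's English description precedes it below -/
import Mathlib

section
/- With notation from the counterexample construction (X ⊆ (ω+1)² with the refined topology, f : X → S_ω defined by f(⟨m, ω⟩) = 0 and f(⟨m, k⟩) = ⟨ξ(k), f_{ξ(k)}(k)⟩ for k ∈ ℕ), the map f is sequence-covering: for every nontrivial sequence p converging to 0 in S_ω, letting n = max of the first coordinates of p's terms, the lift x_k chosen in the fiber with first coordinate n converges to ⟨n, ω⟩ in X and covers p. -/
open Filter Topology

/-- `L g` inside `(ω+1)²` (realized as `ℕ∞ × ℕ∞`): the points `⟨n,k⟩` with `n,k` finite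
and `k ≥ g n`. -/
def Lhat (g : ℕ → ℕ) : Set (ℕ∞ × ℕ∞) :=
  {x | ∃ n k : ℕ, x = ((n : ℕ∞), (k : ℕ∞)) ∧ g n ≤ k}

/-- The refined topology on `(ω+1)²`: generated by the product topology together with
the sets `((ω+1) × {ω}) ∪ L g`. -/
def refinedTop : TopologicalSpace (ℕ∞ × ℕ∞) :=
  TopologicalSpace.generateFrom
    ({s | IsOpen s} ∪
     {s | ∃ g : ℕ → ℕ, s = (Set.univ ×ˢ ({(⊤ : ℕ∞)} : Set ℕ∞)) ∪ Lhat g})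

/-- The removed set `⋃ i (i × A i)`. -/
def badSet (A : ℕ → Set ℕ) : Set (ℕ∞ × ℕ∞) :=
  {x | ∃ i m k : ℕ, m < i ∧ k ∈ A i ∧ x = ((m : ℕ∞), (k : ℕ∞))}

/-- The underlying set of the counterexample space `X = (ω+1)² \ ⋃ i (i × A i)`. -/
def Xc (A : ℕ → Set ℕ) : Type := {x : ℕ∞ × ℕ∞ // x ∉ badSet A}

/-- The subspace topology on `X` induced by the refined topology. -/
def XcTop (A : ℕ → Set ℕ) : TopologicalSpace (Xc A) :=
  refinedTop.induced Subtype.val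

/-- The sequential fan `S_ω` as `{0} ∪ (ℕ × ℕ)` (with `none` playing the role of `0`),
where `L g = {⟨n,k⟩ : k ≥ g n}`. -/
def fanTopology : TopologicalSpace (Option (ℕ × ℕ)) :=
  TopologicalSpace.generateFrom
    ({s | ∃ a : ℕ × ℕ, s = {some a}} ∪
     {s | ∃ g : ℕ → ℕ, s = insert none (Option.some '' {x : ℕ × ℕ | g x.1 ≤ x.2})})

/-- The map `f : X → S_ω` (with `f⟨m,ω⟩ = 0` and `f⟨m,k⟩ = ⟨ξ k, f_{ξ k} k⟩`) is
sequence-covering: every nontrivial sequence `p` converging to `0` in `S_ω` is covered by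
a lift, constant equal to `n = max` of the first coordinates of `p` in the first
coordinate, converging to `⟨n, ω⟩` in `X`. -/
theorem f_sequence_covering (A : ℕ → Set ℕ)
    (hInf : ∀ i, (A i).Infinite)
    (hDisj : Pairwise fun i j => Disjoint (A i) (A j))
    (hUnion : (⋃ i, A i) = Set.univ)
    (hlt : ∀ i j, i < j → ∀ g : (A i) ≃o (A j), ∀ n : A i, (n : ℕ) < (g n : ℕ))
    (f : ∀ i, (A i) ≃o ℕ)
    (ξ : ℕ → ℕ) (hξ : ∀ k, k ∈ A (ξ k))
    (F : Xc A → Option (ℕ × ℕ))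
    (hFtop : ∀ x : Xc A, x.1.2 = ⊤ → F x = none)
    (hFnat : ∀ (x : Xc A) (k : ℕ), x.1.2 = (k : ℕ∞) →
      F x = some (ξ k, (f (ξ k)) ⟨k, hξ k⟩))
    (p : ℕ → ℕ × ℕ)
    (hp : @Tendsto ℕ (Option (ℕ × ℕ)) (fun j => some (p j)) atTop
      (@nhds _ fanTopology none)) :
    ∃ n : ℕ, (∀ j, (p j).1 ≤ n) ∧
      ∃ (q : ℕ → Xc A) (x : Xc A),
        x.1 = ((n : ℕ∞), (⊤ : ℕ∞)) ∧
        (∀ j, (q j).1.1 = (n : ℕ∞)) ∧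
        @Tendsto ℕ (Xc A) q atTop (@nhds _ (XcTop A) x) ∧
        ∀ j, F (q j) = some (p j) := by
    classical
  -- Every fan-neighborhood condition: eventually g (p j).1 ≤ (p j).2
  have hev : ∀ g : ℕ → ℕ, ∀ᶠ j in atTop, g (p j).1 ≤ (p j).2 := by
    intro g
    have hmem := (TopologicalSpace.tendsto_nhds_generateFrom_iff.mp hp)
      (insert none (Option.some '' {x : ℕ × ℕ | g x.1 ≤ x.2}))
      (Or.inr ⟨g, rfl⟩) (Set.mem_insert _ _)
    filter_upwards [hmem] with j hj
    rcases hj with h | ⟨y, hy, hye⟩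
    · exact absurd h (by simp)
    · obtain rfl : y = p j := Option.some_injective _ hye
      exact hy
  -- first coordinates are bounded
  obtain ⟨n, hn⟩ : ∃ n, ∀ j, (p j).1 ≤ n := by
    by_contra h
    push_neg at h
    set c : ℕ → ℕ := fun m => if hm : ∃ j, (p j).1 = m then Nat.find hm else 0 with hc
    set g : ℕ → ℕ := fun m => (p (c m)).2 + 1 with hg
    have hcm : ∀ m, (∃ j, (p j).1 = m) → (p (c m)).1 = m := by
      intro m hm
      simp only [hc, dif_pos hm]
      exact Nat.find_spec hm
    have hS : {m : ℕ | ∃ j, (p j).1 = m}.Infinite := by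
      apply Set.infinite_of_not_bddAbove
      rintro ⟨b, hb⟩
      obtain ⟨j, hj⟩ := h b
      exact absurd (hb ⟨j, rfl⟩) (by omega)
    have hbad : {j : ℕ | (p j).2 < g (p j).1}.Infinite := by
      refine Set.Infinite.mono ?_ (hS.image (f := c) ?_)
      · rintro _ ⟨m, hm, rfl⟩
        have h1 : (p (c m)).1 = m := hcm m hm
        simp only [Set.mem_setOf_eq, hg, h1]
        omega
      · intro m1 h1 m2 h2 he
        rw [← hcm m1 h1, ← hcm m2 h2, he]
    rcases ((hev g).and_frequently
      (Nat.frequently_atTop_iff_infinite.2 hbad)).exists with ⟨j, h1, h2⟩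
    exact absurd h1 (by omega)
  -- second coordinates tend to infinity
  have h2top : Tendsto (fun j => (p j).2) atTop atTop := by
    refine tendsto_atTop.2 fun M => ?_
    simpa using hev (fun _ => M)
  -- the lifted second coordinates
  set k : ℕ → ℕ := fun j => (((f (p j).1).symm (p j).2 : A ((p j).1)) : ℕ) with hkdef
  have memk : ∀ j, k j ∈ A ((p j).1) := fun j => ((f (p j).1).symm (p j).2).2
  have hk_ge : ∀ j, (p j).2 ≤ k j := by
    intro j
    have hsm : StrictMono (fun m : ℕ => (((f (p j).1).symm m : A ((p j).1)) : ℕ)) :=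
      fun a b hab => (f (p j).1).symm.strictMono hab
    exact hsm.le_apply
  have hktopN : Tendsto k atTop atTop :=
    tendsto_atTop_mono hk_ge h2top
  have hktop : Tendsto (fun j => ((k j : ℕ∞))) atTop (nhds ⊤) := by
    rw [ENat.tendsto_nhds_top_iff_natCast_lt]
    intro m
    filter_upwards [tendsto_atTop.1 hktopN (m + 1)] with j hj
    exact_mod_cast Nat.lt_of_succ_le hj
  -- the covering sequence
  have hq : ∀ j, ((n : ℕ∞), (k j : ℕ∞)) ∉ badSet A := by
    intro j ⟨i, m, k', hmi, hk', heq⟩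
    obtain ⟨hm, hk⟩ := Prod.ext_iff.mp heq
    obtain rfl : m = n := (Nat.cast_injective hm).symm
    obtain rfl : k' = k j := Nat.cast_injective hk.symm
    have hne : (p j).1 ≠ i := by have := hn j; omega
    exact Set.disjoint_left.mp (hDisj hne) (memk j) hk'
  set q : ℕ → Xc A := fun j => ⟨((n : ℕ∞), (k j : ℕ∞)), hq j⟩ with hqdef
  have hx : ((n : ℕ∞), (⊤ : ℕ∞)) ∉ badSet A := by
    rintro ⟨i, m, k', hmi, hk', heq⟩
    have : (⊤ : ℕ∞) = (k' : ℕ∞) := (Prod.ext_iff.mp heq).2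
    exact (ENat.coe_ne_top k') this.symm
  set x : Xc A := ⟨((n : ℕ∞), (⊤ : ℕ∞)), hx⟩ with hxdef
  -- key equalities for covering
  have hξk : ∀ j, ξ (k j) = (p j).1 := by
    intro j
    by_contra hne
    exact Set.disjoint_left.mp (hDisj hne) (hξ (k j)) (memk j)
  have key : ∀ (i i' : ℕ) (e : i = i') (k' : ℕ) (h : k' ∈ A i) (h' : k' ∈ A i'),
      (f i ⟨k', h⟩ : ℕ) = f i' ⟨k', h'⟩ := by
    rintro i _ rfl k' h h'; rfl
  have hcov : ∀ j, F (q j) = some (p j) := by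
    intro j
    rw [hFnat (q j) (k j) rfl]
    refine congrArg some (Prod.ext (hξk j) ?_)
    have h1 : (f (ξ (k j)) ⟨k j, hξ (k j)⟩ : ℕ) = f ((p j).1) ⟨k j, memk j⟩ :=
      key _ _ (hξk j) _ _ _
    have h2 : f ((p j).1) ⟨k j, memk j⟩ = (p j).2 := by
      have : (⟨k j, memk j⟩ : A ((p j).1)) = (f (p j).1).symm (p j).2 := Subtype.ext rfl
      rw [this]
      exact (f (p j).1).apply_symm_apply _
    simpa using h1.trans h2
  refine ⟨n, hn, q, x, rfl, fun j => rfl, ?_, hcov⟩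
  -- convergence
  show Tendsto q atTop (@nhds _ (refinedTop.induced Subtype.val) x)
  rw [@nhds_induced _ _ refinedTop]
  rw [tendsto_comap_iff]
  show Tendsto (fun j => ((n : ℕ∞), (k j : ℕ∞))) atTop (@nhds _ refinedTop ((n : ℕ∞), ⊤))
  rw [refinedTop, TopologicalSpace.tendsto_nhds_generateFrom_iff]
  rintro s (hs | ⟨g, rfl⟩) hxs
  · replace hs : IsOpen s := hs
    have ht : Tendsto (fun j => ((n : ℕ∞), (k j : ℕ∞))) atTop (nhds ((n : ℕ∞), ⊤)) :=
      Tendsto.prodMk_nhds tendsto_const_nhds hktop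
    exact ht (hs.mem_nhds hxs)
  · have : ∀ᶠ j in atTop, g n ≤ k j := tendsto_atTop.1 hktopN (g n)
    filter_upwards [this] with j hj
    exact Or.inr ⟨n, k j, rfl, hj⟩
end

section
/- With notation from the counterexample construction, the map f : X → S_ω is not 1-sequence-covering: for every point y = ⟨n, ω⟩ ∈ f⁻¹(0) with n ∈ ω, the sequence k ↦ ⟨n+1, k⟩ in S_ω converges to 0 but every lift of it has all first coordinates > n, hence cannot converge to y; and for y = ⟨ω, ω⟩, every sequence in X converging to y is eventually in (ω+1)×{ω}, so covers no nontrivial sequence of isolated points of S_ω. -/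
open Filter Topology

lemma fan_tendsto_none (c : ℕ) :
    @Tendsto ℕ (Option (ℕ × ℕ)) (fun j => some (c, j)) atTop (@nhds _ fanTopology none) := by
  delta fanTopology
  refine TopologicalSpace.tendsto_nhds_generateFrom_iff.2 fun s hs hnone => ?_
  rcases hs with ⟨a, rfl⟩ | ⟨g, rfl⟩
  · exact absurd hnone (by simp)
  · filter_upwards [eventually_ge_atTop (g c)] with j hj
    exact Set.mem_insert_iff.2 (Or.inr ⟨(c, j), hj, rfl⟩)

lemma key_lemma {A : ℕ → Set ℕ} {x : Xc A} (q : ℕ → Xc A)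
    (hq : @Tendsto ℕ (Xc A) q atTop (@nhds _ (XcTop A) x))
    (s : Set (ℕ∞ × ℕ∞))
    (hs : s ∈ ({s | IsOpen s} ∪
      {s | ∃ g : ℕ → ℕ, s = (Set.univ ×ˢ ({(⊤ : ℕ∞)} : Set ℕ∞)) ∪ Lhat g} :
        Set (Set (ℕ∞ × ℕ∞))))
    (hxs : x.1 ∈ s) : ∀ᶠ j in atTop, (q j).1 ∈ s := by
  letI : TopologicalSpace (Xc A) := XcTop A
  have hopen : IsOpen (Subtype.val ⁻¹' s : Set (Xc A)) :=
    @isOpen_induced _ _ refinedTop Subtype.val s (TopologicalSpace.GenerateOpen.basic s hs)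
  exact hq (hopen.mem_nhds hxs)

/-- The map `f : X → S_ω` is not 1-sequence-covering: no single point `x` of the
fiber `f⁻¹(0) = (ω+1) × {ω}` serves as the limit of lifts of all nontrivial sequences
converging to `0` in `S_ω`. -/
theorem f_not_one_sequence_covering (A : ℕ → Set ℕ)
    (hInf : ∀ i, (A i).Infinite)
    (hDisj : Pairwise fun i j => Disjoint (A i) (A j))
    (hUnion : (⋃ i, A i) = Set.univ)
    (hlt : ∀ i j, i < j → ∀ g : (A i) ≃o (A j), ∀ n : A i, (n : ℕ) < (g n : ℕ))
    (f : ∀ i, (A i) ≃o ℕ)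
    (ξ : ℕ → ℕ) (hξ : ∀ k, k ∈ A (ξ k))
    (F : Xc A → Option (ℕ × ℕ))
    (hFtop : ∀ x : Xc A, x.1.2 = ⊤ → F x = none)
    (hFnat : ∀ (x : Xc A) (k : ℕ), x.1.2 = (k : ℕ∞) →
      F x = some (ξ k, (f (ξ k)) ⟨k, hξ k⟩)) :
    ¬ ∃ x : Xc A, F x = none ∧
        ∀ p : ℕ → ℕ × ℕ,
          @Tendsto ℕ (Option (ℕ × ℕ)) (fun j => some (p j)) atTop
            (@nhds _ fanTopology none) →
          ∃ q : ℕ → Xc A,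
            @Tendsto ℕ (Xc A) q atTop (@nhds _ (XcTop A) x) ∧
            ∀ j, F (q j) = some (p j) := by
  rintro ⟨x, hx0, hlift⟩
  have hb : x.1.2 = ⊤ := by
    by_contra h
    obtain ⟨k, hk⟩ := WithTop.ne_top_iff_exists.1 h
    rw [hFnat x k hk.symm] at hx0
    exact Option.some_ne_none _ hx0
  rcases eq_or_ne x.1.1 ⊤ with ha | ha
  · -- x = (⊤, ⊤)
    obtain ⟨q, hq, hFq⟩ := hlift (fun j => (0, j)) (fan_tendsto_none 0)
    have hsnd : ∀ j, ∃ k : ℕ, (q j).1.2 = (k : ℕ∞) := by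
      intro j
      have hne : (q j).1.2 ≠ ⊤ := by
        intro h
        have h2 := hFq j
        rw [hFtop _ h] at h2
        exact Option.some_ne_none _ h2.symm
      obtain ⟨k, hk⟩ := WithTop.ne_top_iff_exists.1 hne
      exact ⟨k, hk.symm⟩
    choose kf hkf using hsnd
    have hne : ∀ n : ℕ, ∀ᶠ j in atTop, (q j).1.1 ≠ (n : ℕ∞) := by
      intro n
      have hev := key_lemma q hq (({(n : ℕ∞)}ᶜ) ×ˢ Set.univ)
        (Or.inl ((isOpen_compl_singleton).prod isOpen_univ))
        ⟨by simp [ha], trivial⟩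
      filter_upwards [hev] with j hj
      exact hj.1
    choose J hJ using fun n => eventually_atTop.1 (hne n)
    set g : ℕ → ℕ := fun n => 1 + (Finset.range (J n)).sup kf with hgdef
    have hev := key_lemma q hq ((Set.univ ×ˢ ({(⊤ : ℕ∞)} : Set ℕ∞)) ∪ Lhat g)
      (Or.inr ⟨g, rfl⟩) (Or.inl ⟨trivial, hb⟩)
    obtain ⟨j, hj⟩ := hev.exists
    rcases hj with hj | hj
    · have : (q j).1.2 = ⊤ := hj.2
      rw [hkf j] at this
      exact WithTop.coe_ne_top this
    · obtain ⟨m, k, hmk, hgk⟩ := hj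
      have h1 : (q j).1.1 = (m : ℕ∞) := by rw [hmk]
      have h2 : (k : ℕ∞) = (kf j : ℕ∞) := by
        rw [← hkf j, hmk]
      have h2' : k = kf j := Nat.cast_inj.1 h2
      have hjlt : j < J m := by
        by_contra hge
        exact hJ m j (le_of_not_gt hge) h1
      have hle : kf j ≤ (Finset.range (J m)).sup kf :=
        Finset.le_sup (Finset.mem_range.2 hjlt)
      have : g m ≤ k := hgk
      rw [hgdef] at this
      simp only at this
      omega
  · -- x = (n, ⊤)
    obtain ⟨n, hn⟩ := WithTop.ne_top_iff_exists.1 ha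
    obtain ⟨q, hq, hFq⟩ := hlift (fun j => (n + 1, j)) (fan_tendsto_none (n + 1))
    have hsnd : ∀ j, ∃ k : ℕ, (q j).1.2 = (k : ℕ∞) ∧ k ∈ A (n + 1) := by
      intro j
      have hne : (q j).1.2 ≠ ⊤ := by
        intro h
        have h2 := hFq j
        rw [hFtop _ h] at h2
        exact Option.some_ne_none _ h2.symm
      obtain ⟨k, hk⟩ := WithTop.ne_top_iff_exists.1 hne
      have heq := hFnat (q j) k hk.symm
      rw [hFq j] at heq
      have h1 : ξ k = n + 1 := (Prod.mk.injEq _ _ _ _ ▸ (Option.some.inj heq)).1.symm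
      exact ⟨k, hk.symm, h1 ▸ hξ k⟩
    have hev := key_lemma q hq (({(n : ℕ∞)}) ×ˢ Set.univ)
      (Or.inl ((ENat.isOpen_singleton (by simp)).prod isOpen_univ))
      ⟨by simp [← hn]; rfl, trivial⟩
    obtain ⟨j, hj⟩ := hev.exists
    obtain ⟨k, hk, hkA⟩ := hsnd j
    have h1 : (q j).1.1 = (n : ℕ∞) := hj.1
    exact (q j).2 ⟨n + 1, n, k, Nat.lt_succ_self n, hkA, Prod.ext h1 hk⟩
end

section
/- With notation from the counterexample construction, every fiber of f : X → S_ω is compact: f⁻¹(0) = (ω+1)×{ω} ∩ X is homeomorphic to ω+1, and each fiber f⁻¹(⟨a,b⟩) = ((ω+1)×{j}) \ (ξ(j)×A_{ξ(j)}) ∩ X is a convergent sequence with its limit, hence compact. -/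
open Filter Topology

lemma isOpen_pair (n k : ℕ) : IsOpen ({(((n : ℕ∞)), ((k : ℕ∞)))} : Set (ℕ∞ × ℕ∞)) := by
  rw [show ({(((n : ℕ∞)), ((k : ℕ∞)))} : Set (ℕ∞ × ℕ∞))
      = ({(n : ℕ∞)} : Set ℕ∞) ×ˢ ({(k : ℕ∞)} : Set ℕ∞) from (Set.singleton_prod_singleton).symm]
  exact (ENat.isOpen_singleton (ENat.coe_ne_top n)).prod
    (ENat.isOpen_singleton (ENat.coe_ne_top k))

lemma isOpen_Lhat (g : ℕ → ℕ) : IsOpen (Lhat g) := by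
  refine isOpen_iff_forall_mem_open.mpr ?_
  rintro x ⟨n, k, rfl, h⟩
  exact ⟨{(((n : ℕ∞)), ((k : ℕ∞)))}, fun z hz => by
    rw [Set.mem_singleton_iff] at hz; exact ⟨n, k, hz, h⟩, isOpen_pair n k, rfl⟩

lemma isCompact_coarser {α : Type*} {t₁ t₂ : TopologicalSpace α} (h : t₁ ≤ t₂)
    (hc : @CompactSpace α t₁) : @CompactSpace α t₂ := by
  constructor
  have h1 := @isCompact_univ α t₁ hc
  have h2 := @IsCompact.image α α t₁ t₂ Set.univ id h1 (continuous_id_of_le h)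
  rwa [Set.image_id] at h2

lemma compact_fiber_aux (A : ℕ → Set ℕ) (s : Set (Xc A))
    (hC : IsClosed (Subtype.val '' s))
    (hG : ∀ g : ℕ → ℕ,
      ∃ V : Set (ℕ∞ × ℕ∞), IsOpen V ∧
        ((fun u : ↥s => u.1.1) ⁻¹' ((Set.univ ×ˢ ({(⊤ : ℕ∞)} : Set ℕ∞)) ∪ Lhat g)
          = (fun u : ↥s => u.1.1) ⁻¹' V)) :
    @IsCompact (Xc A) (XcTop A) s := by
  rw [@isCompact_iff_compactSpace (Xc A) (XcTop A) s]
  set j : ↥s → ℕ∞ × ℕ∞ := fun u => u.1.1 with hj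
  have htop : (@instTopologicalSpaceSubtype (Xc A) (fun x => x ∈ s) (XcTop A))
      = refinedTop.induced j := induced_compose
  have hle : (TopologicalSpace.induced j inferInstance : TopologicalSpace ↥s)
      ≤ refinedTop.induced j := by
    letI : TopologicalSpace ↥s := TopologicalSpace.induced j inferInstance
    rw [refinedTop]
    apply le_induced_generateFrom
    rintro G (hGopen | ⟨g, rfl⟩)
    · exact isOpen_induced hGopen
    · obtain ⟨V, hV, hpre⟩ := hG g
      rw [show j ⁻¹' _ = j ⁻¹' V from hpre]
      exact isOpen_induced hV
  have hcs : @CompactSpace ↥s (TopologicalSpace.induced j inferInstance) := by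
    letI : TopologicalSpace ↥s := TopologicalSpace.induced j inferInstance
    have hemb : IsEmbedding j :=
      ⟨IsInducing.induced j, fun u v h => Subtype.ext (Subtype.ext h)⟩
    rw [← isCompact_univ_iff, hemb.isCompact_iff, Set.image_univ]
    have hr : Set.range j = Subtype.val '' s := by
      ext z
      constructor
      · rintro ⟨u, rfl⟩; exact ⟨u.1, u.2, rfl⟩
      · rintro ⟨x, hx, rfl⟩; exact ⟨⟨x, hx⟩, rfl⟩
    rw [hr]
    exact hC.isCompact
  rw [htop]
  exact isCompact_coarser hle hcs

/-- Every fiber of the map `f : X → S_ω` is compact. -/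
theorem f_fibers_compact (A : ℕ → Set ℕ)
    (hInf : ∀ i, (A i).Infinite)
    (hDisj : Pairwise fun i j => Disjoint (A i) (A j))
    (hUnion : (⋃ i, A i) = Set.univ)
    (hlt : ∀ i j, i < j → ∀ g : (A i) ≃o (A j), ∀ n : A i, (n : ℕ) < (g n : ℕ))
    (f : ∀ i, (A i) ≃o ℕ)
    (ξ : ℕ → ℕ) (hξ : ∀ k, k ∈ A (ξ k))
    (F : Xc A → Option (ℕ × ℕ))
    (hFtop : ∀ x : Xc A, x.1.2 = ⊤ → F x = none)
    (hFnat : ∀ (x : Xc A) (k : ℕ), x.1.2 = (k : ℕ∞) →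
      F x = some (ξ k, (f (ξ k)) ⟨k, hξ k⟩)) :
    ∀ y : Option (ℕ × ℕ), @IsCompact (Xc A) (XcTop A) (F ⁻¹' {y}) := by
  intro y
  match y with
  | none =>
    have hmem : ∀ x : Xc A, F x = none ↔ x.1.2 = ⊤ := by
      intro x
      constructor
      · intro h
        by_contra hne
        obtain ⟨k, hk⟩ := WithTop.ne_top_iff_exists.mp hne
        rw [hFnat x k hk.symm] at h
        exact Option.some_ne_none _ h
      · exact hFtop x
    apply compact_fiber_aux
    · have himg : Subtype.val '' (F ⁻¹' {none})
          = Set.univ ×ˢ ({(⊤ : ℕ∞)} : Set ℕ∞) := by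
        ext z
        constructor
        · rintro ⟨x, hx, rfl⟩
          exact ⟨trivial, (hmem x).mp hx⟩
        · intro hz
          have hzb : z ∉ badSet A := by
            rintro ⟨i, m, k, _, _, rfl⟩
            exact ENat.coe_ne_top k hz.2
          exact ⟨⟨z, hzb⟩, hFtop ⟨z, hzb⟩ hz.2, rfl⟩
      refine Eq.mpr (congrArg IsClosed himg) ?_
      exact isClosed_univ.prod isClosed_singleton
    · intro g
      refine ⟨Set.univ, isOpen_univ, ?_⟩
      ext u
      simp only [Set.mem_preimage, Set.mem_univ, iff_true]
      exact Or.inl ⟨trivial, (hmem u.1).mp u.2⟩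
  | some (a, b) =>
    obtain ⟨k₀, hk₀A, hξk₀, hfall⟩ :
        ∃ k₀ : ℕ, k₀ ∈ A a ∧ ξ k₀ = a ∧
          ∀ i : ℕ, i = a → ∀ hk0 : k₀ ∈ A i, f i ⟨k₀, hk0⟩ = b := by
      refine ⟨((f a).symm b).1, ((f a).symm b).2, ?_, ?_⟩
      · by_contra h
        exact Set.disjoint_left.mp (hDisj h) (hξ _) ((f a).symm b).2
      · rintro i rfl hk0
        rw [show (⟨_, hk0⟩ : A i) = (f i).symm b from Subtype.ext rfl,
          OrderIso.apply_symm_apply]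
    have hfk₀ : f (ξ k₀) ⟨k₀, hξ k₀⟩ = b := hfall _ hξk₀ _
    have huniq : ∀ k : ℕ, ξ k = a → f (ξ k) ⟨k, hξ k⟩ = b → k = k₀ := by
      intro k h1 h2
      have e2 : f (ξ k) ⟨k₀, h1.symm ▸ hk₀A⟩ = b := hfall (ξ k) h1 _
      exact congrArg Subtype.val ((f (ξ k)).injective (h2.trans e2.symm))
    have hmem : ∀ x : Xc A, F x = some (a, b) ↔ x.1.2 = (k₀ : ℕ∞) := by
      intro x
      constructor
      · intro h
        rcases hx2 : x.1.2 with _ | k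
        · rw [hFtop x hx2] at h
          exact absurd h (by simp)
        · rw [hFnat x k hx2] at h
          have hp : (ξ k, f (ξ k) ⟨k, hξ k⟩) = (a, b) := Option.some_injective _ h
          have h1 : ξ k = a := congrArg Prod.fst hp
          have h2 : f (ξ k) ⟨k, hξ k⟩ = b := congrArg Prod.snd hp
          rw [huniq k h1 h2]
          rfl
      · intro h
        rw [hFnat x k₀ h]
        exact congrArg some (Prod.ext hξk₀ hfk₀)
    apply compact_fiber_aux
    · have himg : Subtype.val '' (F ⁻¹' {some (a, b)})
          = (Set.univ ×ˢ ({(k₀ : ℕ∞)} : Set ℕ∞)) ∩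
            {z : ℕ∞ × ℕ∞ | ∃ m : ℕ, m < ξ k₀ ∧ z = (((m : ℕ∞)), ((k₀ : ℕ∞)))}ᶜ := by
        ext z
        constructor
        · rintro ⟨x, hx, rfl⟩
          refine ⟨⟨trivial, (hmem x).mp hx⟩, ?_⟩
          rintro ⟨m, hm, hz⟩
          exact x.2 ⟨ξ k₀, m, k₀, hm, hξ k₀, hz⟩
        · rintro ⟨⟨-, h2⟩, hnb⟩
          have h2' : z.2 = (k₀ : ℕ∞) := h2
          have hzb : z ∉ badSet A := by
            rintro ⟨i, m, k, hmi, hkA, rfl⟩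
            have hkk : (k : ℕ∞) = (k₀ : ℕ∞) := h2'
            have hk : k = k₀ := by exact_mod_cast hkk
            have hik : i = ξ k₀ := by
              by_contra hne
              exact Set.disjoint_left.mp (hDisj hne) (hk ▸ hkA) (hξ k₀)
            exact hnb ⟨m, hik ▸ hmi, by rw [hk]⟩
          exact ⟨⟨z, hzb⟩, (hmem ⟨z, hzb⟩).mpr h2', rfl⟩
      refine Eq.mpr (congrArg IsClosed himg) ?_
      refine (isClosed_univ.prod isClosed_singleton).inter (IsOpen.isClosed_compl ?_)
      rw [show {z : ℕ∞ × ℕ∞ | ∃ m : ℕ, m < ξ k₀ ∧ z = (((m : ℕ∞)), ((k₀ : ℕ∞)))}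
          = ⋃ (m : ℕ) (_ : m < ξ k₀), {(((m : ℕ∞)), ((k₀ : ℕ∞)))} from by
        ext z; simp [Set.mem_iUnion]]
      exact isOpen_iUnion fun m => isOpen_iUnion fun _ => isOpen_pair m k₀
    · intro g
      refine ⟨Lhat g, isOpen_Lhat g, ?_⟩
      ext u
      simp only [Set.mem_preimage, Set.mem_union]
      constructor
      · rintro (⟨-, ht⟩ | h)
        · have h2 : u.1.1.2 = (k₀ : ℕ∞) := (hmem u.1).mp u.2
          have ht' : u.1.1.2 = (⊤ : ℕ∞) := ht
          exact absurd (h2.symm.trans ht') (ENat.coe_ne_top k₀)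
        · exact h
      · exact Or.inr
end
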